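/- Suppose p = √2−1. Then for every positive integer x, P(S_n ≥ x for some n ≥ 1) = 1 and P(S_n ≤ −x for some n ≥ 1) = 1. -/

import Mathlib

open MeasureTheory ProbabilityTheory Filter
open scoped ENNReal Classical

noncomputable section

variable {Ω : Type*} [MeasurableSpace Ω]

/-- The `k`-th step of the ladder chain `L(2,2,p)` built from the driving
sequence `ξ` (indexed from 1): `X₁ = ±1` according to `ξ₁`, and for `k ≥ 2`,
`X_k = -1` if `ξ_k = -1`, `X_k = 2` if `ξ_k = ξ_{k-1} = 1`, and `X_k = 1`
if `ξ_k = 1, ξ_{k-1} = -1`. -/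
def ladderX (ξ : ℕ → Ω → ℤ) (k : ℕ) (ω : Ω) : ℤ :=
  if k = 1 then (if ξ 1 ω = 1 then 1 else -1)
  else if ξ k ω = -1 then -1
  else if ξ (k - 1) ω = 1 then 2 else 1

/-- The ladder chain `S_n = X₁ + ⋯ + X_n` (with `S_0 = 0`). -/
def ladderS (ξ : ℕ → Ω → ℤ) (n : ℕ) (ω : Ω) : ℤ :=
  ∑ k ∈ Finset.Icc 1 n, ladderX ξ k ω

/-- indicator that `ξ n = 1` (with the convention `ξ 0 = -1`). -/
def ladderA (ξ : ℕ → Ω → ℤ) (n : ℕ) (ω : Ω) : ℝ :=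
  if n = 0 then 0 else if ξ n ω = 1 then 1 else 0

/-- The martingale `M_n = S_n + p · 1[ξ_n = 1]`. -/
def ladderM (p : ℝ) (ξ : ℕ → Ω → ℤ) (n : ℕ) (ω : Ω) : ℝ :=
  (ladderS ξ n ω : ℝ) + p * ladderA ξ n ω

lemma ladderA_mem (ξ : ℕ → Ω → ℤ) (n : ℕ) (ω : Ω) :
    ladderA ξ n ω = 0 ∨ ladderA ξ n ω = 1 := by
  unfold ladderA; split_ifs <;> simp

lemma ladderA_nonneg (ξ : ℕ → Ω → ℤ) (n : ℕ) (ω : Ω) : 0 ≤ ladderA ξ n ω := by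
  rcases ladderA_mem ξ n ω with h | h <;> rw [h] <;> norm_num

lemma ladderA_le_one (ξ : ℕ → Ω → ℤ) (n : ℕ) (ω : Ω) : ladderA ξ n ω ≤ 1 := by
  rcases ladderA_mem ξ n ω with h | h <;> rw [h] <;> norm_num

lemma ladderX_bound (ξ : ℕ → Ω → ℤ) (k : ℕ) (ω : Ω) : |ladderX ξ k ω| ≤ 2 := by
  unfold ladderX; split_ifs <;> norm_num

lemma ladderS_bound (ξ : ℕ → Ω → ℤ) (n : ℕ) (ω : Ω) :
    |ladderS ξ n ω| ≤ 2 * n := by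
  unfold ladderS
  calc |∑ k ∈ Finset.Icc 1 n, ladderX ξ k ω| ≤ ∑ k ∈ Finset.Icc 1 n, |ladderX ξ k ω| :=
        Finset.abs_sum_le_sum_abs _ _
    _ ≤ ∑ _k ∈ Finset.Icc 1 n, 2 := Finset.sum_le_sum fun k _ => ladderX_bound ξ k ω
    _ = 2 * n := by simp [Nat.card_Icc, mul_comm]

lemma ladderS_zero (ξ : ℕ → Ω → ℤ) (ω : Ω) : ladderS ξ 0 ω = 0 := by
  unfold ladderS
  rw [Finset.Icc_eq_empty (by omega), Finset.sum_empty]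

lemma ladderM_zero (p : ℝ) (ξ : ℕ → Ω → ℤ) (ω : Ω) : ladderM p ξ 0 ω = 0 := by
  simp [ladderM, ladderA, ladderS_zero]

lemma ladderS_succ (ξ : ℕ → Ω → ℤ) (n : ℕ) (ω : Ω) :
    ladderS ξ (n + 1) ω = ladderS ξ n ω + ladderX ξ (n + 1) ω := by
  unfold ladderS
  exact Finset.sum_Icc_succ_top (by omega) _

lemma ladderX_eq (ξ : ℕ → Ω → ℤ) (hval : ∀ n ω, ξ n ω = 1 ∨ ξ n ω = -1)
    (n : ℕ) (ω : Ω) :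
    (ladderX ξ (n + 1) ω : ℝ) =
      -1 + 2 * ladderA ξ (n + 1) ω + ladderA ξ n ω * ladderA ξ (n + 1) ω := by
  rcases Nat.eq_zero_or_pos n with hn | hn
  · subst hn
    rcases hval 1 ω with h | h <;> simp [ladderX, ladderA, h] <;> norm_num
  · have hne : n + 1 ≠ 1 := by omega
    have hn0 : n ≠ 0 := by omega
    rcases hval (n + 1) ω with h | h <;> rcases hval n ω with h' | h' <;>
      simp [ladderX, ladderA, hne, hn0, h, h', Nat.add_sub_cancel] <;> norm_num

/-- The key increment identity. -/
lemma ladderM_succ (p : ℝ) (ξ : ℕ → Ω → ℤ) (hval : ∀ n ω, ξ n ω = 1 ∨ ξ n ω = -1)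
    (n : ℕ) (ω : Ω) :
    ladderM p ξ (n + 1) ω = ladderM p ξ n ω +
      ((-1 + (2 + p) * ladderA ξ (n + 1) ω) +
        ladderA ξ n ω * (ladderA ξ (n + 1) ω - p)) := by
  unfold ladderM
  rw [ladderS_succ]
  push_cast
  rw [ladderX_eq ξ hval n ω]
  ring

/-- If `p = √2 - 1`, then for every positive integer `x`,
the ladder chain a.s. eventually reaches level `x` and a.s. eventually
reaches level `-x`. -/
theorem ladder_critical_reaches_any_level (p : ℝ) (hp : p = Real.sqrt 2 - 1)
    (P : Measure Ω) [IsProbabilityMeasure P]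
    (ξ : ℕ → Ω → ℤ) (hmeas : ∀ n, Measurable (ξ n))
    (hindep : iIndepFun ξ P)
    (hval : ∀ n ω, ξ n ω = 1 ∨ ξ n ω = -1)
    (hprob : ∀ n, 1 ≤ n → P {ω | ξ n ω = 1} = ENNReal.ofReal p)
    (x : ℤ) (hx : 0 < x) :
    P {ω | ∃ n, 1 ≤ n ∧ x ≤ ladderS ξ n ω} = 1 ∧
    P {ω | ∃ n, 1 ≤ n ∧ ladderS ξ n ω ≤ -x} = 1 := by
  classical
  have hs2 : Real.sqrt 2 ^ 2 = 2 := Real.sq_sqrt (by norm_num)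
  have hs2' : 0 ≤ Real.sqrt 2 := Real.sqrt_nonneg 2
  have hp0 : 0 ≤ p := by rw [hp]; nlinarith
  have hp1 : p ≤ 1 := by rw [hp]; nlinarith
  have hcrit : p ^ 2 + 2 * p - 1 = 0 := by rw [hp]; nlinarith
  have hsm : ∀ i, StronglyMeasurable (ξ i) := fun i => (hmeas i).stronglyMeasurable
  set 𝒢 : Filtration ℕ ‹MeasurableSpace Ω› := Filtration.natural ξ hsm with h𝒢
  -- measurability of ξ j with respect to 𝒢 n
  have hxiG : ∀ n j, j ≤ n → Measurable[𝒢 n] (ξ j) := by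
    intro n j hj
    refine Measurable.of_comap_le ?_
    exact le_iSup₂ (f := fun j (_ : j ≤ n) => MeasurableSpace.comap (ξ j) inferInstance) j hj
  -- measurability of M n with respect to 𝒢 n
  have hXG : ∀ n k, k ≤ n → Measurable[𝒢 n] (ladderX ξ k) := by
    intro n k hkn
    unfold ladderX
    by_cases hk : k = 1
    · subst hk
      simp only [if_pos rfl]
      refine Measurable.ite (p := fun ω => ξ 1 ω = 1) ?_ measurable_const measurable_const
      exact (hxiG n 1 hkn) (measurableSet_singleton 1)
    · simp only [if_neg hk]
      refine Measurable.ite (p := fun ω => ξ k ω = -1) ?_ measurable_const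
        (Measurable.ite (p := fun ω => ξ (k - 1) ω = 1) ?_ measurable_const measurable_const)
      · exact (hxiG n k hkn) (measurableSet_singleton (-1))
      · exact (hxiG n (k - 1) (by omega)) (measurableSet_singleton 1)
  have hAG : ∀ n, Measurable[𝒢 n] (ladderA ξ n) := by
    intro n
    unfold ladderA
    by_cases hn : n = 0
    · simp only [if_pos hn]; exact measurable_const
    · simp only [if_neg hn]
      refine Measurable.ite (p := fun ω => ξ n ω = 1) ?_ measurable_const measurable_const
      exact (hxiG n n le_rfl) (measurableSet_singleton 1)
  have hMG : ∀ n, Measurable[𝒢 n] (ladderM p ξ n) := by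
    intro n
    unfold ladderM
    refine Measurable.add ?_ (measurable_const.mul (hAG n))
    have : Measurable[𝒢 n] (ladderS ξ n) := by
      unfold ladderS
      exact Finset.measurable_sum _ fun k hk => hXG n k (Finset.mem_Icc.1 hk).2
    exact (measurable_of_countable (fun z : ℤ => (z : ℝ))).comp this
  have hadp : StronglyAdapted 𝒢 (ladderM p ξ) := fun n => (hMG n).stronglyMeasurable
  -- integrability
  have hMabs : ∀ n ω, |ladderM p ξ n ω| ≤ 2 * n + 1 := by
    intro n ω
    have h1 : |(ladderS ξ n ω : ℝ)| ≤ 2 * n := by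
      have := ladderS_bound ξ n ω
      calc |(ladderS ξ n ω : ℝ)| = ((|ladderS ξ n ω| : ℤ) : ℝ) := by
            rw [Int.cast_abs]
        _ ≤ ((2 * n : ℤ) : ℝ) := by exact_mod_cast this
        _ = 2 * n := by push_cast; ring
    have h2 : |p * ladderA ξ n ω| ≤ 1 := by
      rw [abs_mul, abs_of_nonneg hp0, abs_of_nonneg (ladderA_nonneg ξ n ω)]
      calc p * ladderA ξ n ω ≤ 1 * 1 :=
            mul_le_mul hp1 (ladderA_le_one ξ n ω) (ladderA_nonneg ξ n ω) zero_le_one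
        _ = 1 := by ring
    calc |ladderM p ξ n ω| ≤ |(ladderS ξ n ω : ℝ)| + |p * ladderA ξ n ω| := abs_add_le _ _
      _ ≤ 2 * n + 1 := add_le_add h1 h2
  have hMint : ∀ n, Integrable (ladderM p ξ n) P := by
    intro n
    refine Integrable.mono' (integrable_const (2 * n + 1 : ℝ))
      (((hMG n).stronglyMeasurable.mono (𝒢.le n)).aestronglyMeasurable)
      (ae_of_all _ fun ω => ?_)
    simpa [Real.norm_eq_abs] using hMabs n ω
  -- integrability of the pieces
  have hAmeas : ∀ n, Measurable (ladderA ξ n) := fun n => (hAG n).mono (𝒢.le n) le_rfl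
  have hAint : ∀ n, Integrable (ladderA ξ n) P := by
    intro n
    refine Integrable.mono' (integrable_const (1 : ℝ))
      (hAmeas n).aestronglyMeasurable (ae_of_all _ fun ω => ?_)
    rw [Real.norm_eq_abs, abs_of_nonneg (ladderA_nonneg ξ n ω)]
    exact ladderA_le_one ξ n ω
  -- the integral of the indicator
  have hInd : ∀ n, ∫ ω, ladderA ξ (n + 1) ω ∂P = p := by
    intro n
    have heq : ladderA ξ (n + 1) =
        Set.indicator {ω | ξ (n + 1) ω = 1} (fun _ => (1 : ℝ)) := by
      funext ω
      simp [ladderA, Set.indicator_apply, Set.mem_setOf_eq, Nat.succ_ne_zero]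
    have hms : MeasurableSet {ω | ξ (n + 1) ω = 1} :=
      (hmeas (n + 1)) (measurableSet_singleton 1)
    rw [heq, integral_indicator_const (1 : ℝ) hms, measureReal_def, hprob (n + 1) (by omega),
      smul_eq_mul, mul_one, ENNReal.toReal_ofReal hp0]
  -- conditional expectation one-step property
  have hstep : ∀ n, ladderM p ξ n =ᵐ[P] P[ladderM p ξ (n + 1)|𝒢 n] := by
    intro n
    set U : Ω → ℝ := fun ω => -1 + (2 + p) * ladderA ξ (n + 1) ω with hU
    set W : Ω → ℝ := fun ω => ladderA ξ (n + 1) ω - p with hW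
    set V : Ω → ℝ := ladderA ξ n with hV
    have hdecomp : ladderM p ξ (n + 1) = ladderM p ξ n + (U + V * W) := by
      funext ω
      show ladderM p ξ (n + 1) ω = ladderM p ξ n ω + (U ω + V ω * W ω)
      simp only [hU, hV, hW]
      exact ladderM_succ p ξ hval n ω
    have hUint : Integrable U P := by
      have := (integrable_const (-1 : ℝ)).add ((hAint (n + 1)).const_mul (2 + p))
      simpa [hU] using this
    have hWint : Integrable W P := (hAint (n + 1)).sub (integrable_const p)
    have hVWint : Integrable (V * W) P := by
      refine Integrable.mono' (integrable_const (2 : ℝ))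
        (((hAmeas n).mul ((hAmeas (n + 1)).sub measurable_const)).aestronglyMeasurable)
        (ae_of_all _ fun ω => ?_)
      rw [Real.norm_eq_abs, Pi.mul_apply, abs_mul]
      have h1 := ladderA_nonneg ξ n ω
      have h2 := ladderA_le_one ξ n ω
      have h3 := ladderA_nonneg ξ (n + 1) ω
      have h4 := ladderA_le_one ξ (n + 1) ω
      have hWabs : |W ω| ≤ 2 := by
        have hWo : W ω = ladderA ξ (n + 1) ω - p := rfl
        rw [hWo, abs_le]; constructor <;> nlinarith
      have hVabs : |V ω| ≤ 1 := by
        have hVo : V ω = ladderA ξ n ω := rfl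
        rw [hVo, abs_of_nonneg h1]; exact h2
      nlinarith [abs_nonneg (W ω), abs_nonneg (V ω)]
    have hindepG : Indep (MeasurableSpace.comap (ξ (n + 1)) inferInstance) (𝒢 n) P :=
      hindep.indep_comap_natural_of_lt hsm (Nat.lt_succ_self n)
    have hUsm : StronglyMeasurable[MeasurableSpace.comap (ξ (n + 1)) inferInstance] U := by
      have h : U = (fun z : ℤ => -1 + (2 + p) * (if z = 1 then (1 : ℝ) else 0)) ∘ ξ (n + 1) := by
        funext ω; simp [hU, ladderA, Nat.succ_ne_zero, Function.comp]
      rw [h]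
      exact ((measurable_of_countable _).comp
        (comap_measurable _)).stronglyMeasurable
    have hWsm : StronglyMeasurable[MeasurableSpace.comap (ξ (n + 1)) inferInstance] W := by
      have h : W = (fun z : ℤ => (if z = 1 then (1 : ℝ) else 0) - p) ∘ ξ (n + 1) := by
        funext ω; simp [hW, ladderA, Nat.succ_ne_zero, Function.comp]
      rw [h]
      exact ((measurable_of_countable _).comp
        (comap_measurable _)).stronglyMeasurable
    have hUce : P[U|𝒢 n] =ᵐ[P] fun _ => ∫ ω, U ω ∂P :=
      condExp_indep_eq (hmeas (n + 1)).comap_le (𝒢.le n) hUsm hindepG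
    have hWce : P[W|𝒢 n] =ᵐ[P] fun _ => ∫ ω, W ω ∂P :=
      condExp_indep_eq (hmeas (n + 1)).comap_le (𝒢.le n) hWsm hindepG
    have hUval : ∫ ω, U ω ∂P = 0 := by
      rw [hU]
      rw [integral_add (integrable_const _) ((hAint (n + 1)).const_mul (2 + p)),
        integral_const, integral_const_mul, hInd n]
      have : (2 + p) * p = p ^ 2 + 2 * p := by ring
      simp only [measureReal_def, measure_univ, ENNReal.toReal_one, smul_eq_mul, one_mul, this]
      linarith
    have hWval : ∫ ω, W ω ∂P = 0 := by
      rw [hW, integral_sub (hAint (n + 1)) (integrable_const p), hInd n, integral_const]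
      simp
    have hpull : P[V * W|𝒢 n] =ᵐ[P] V * P[W|𝒢 n] :=
      condExp_mul_of_stronglyMeasurable_left (hAG n).stronglyMeasurable hVWint hWint
    have hU0 : P[U|𝒢 n] =ᵐ[P] (0 : Ω → ℝ) :=
      hUce.trans (Filter.EventuallyEq.of_eq (funext fun ω => by simp [hUval]))
    have hVW0 : P[V * W|𝒢 n] =ᵐ[P] (0 : Ω → ℝ) := by
      refine hpull.trans ?_
      have h1 : V * P[W|𝒢 n] =ᵐ[P] V * (fun _ => (0 : ℝ)) := by
        refine Filter.EventuallyEq.mul Filter.EventuallyEq.rfl ?_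
        exact hWce.trans (Filter.EventuallyEq.of_eq (funext fun ω => by simp [hWval]))
      refine h1.trans (Filter.EventuallyEq.of_eq ?_)
      funext ω; simp
    have h3 : P[ladderM p ξ n|𝒢 n] = ladderM p ξ n :=
      condExp_of_stronglyMeasurable (𝒢.le n) (hadp n) (hMint n)
    refine Filter.EventuallyEq.symm ?_
    rw [hdecomp]
    refine (condExp_add (hMint n) (hUint.add hVWint) (𝒢 n)).trans ?_
    have h4 : P[U + V * W|𝒢 n] =ᵐ[P] (0 : Ω → ℝ) := by
      refine (condExp_add hUint hVWint (𝒢 n)).trans ?_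
      refine (Filter.EventuallyEq.add hU0 hVW0).trans (Filter.EventuallyEq.of_eq ?_)
      funext ω; simp
    refine (Filter.EventuallyEq.add (Filter.EventuallyEq.of_eq h3) h4).trans
      (Filter.EventuallyEq.of_eq ?_)
    funext ω; simp
  -- the martingale and its properties
  have hmart : Martingale (ladderM p ξ) 𝒢 P := martingale_nat hadp hMint hstep
  have hincb : ∀ᵐ ω ∂P, ∀ i, |ladderM p ξ (i + 1) ω - ladderM p ξ i ω| ≤ ((6 : NNReal) : ℝ) := by
    refine ae_of_all _ fun ω i => ?_
    have h6 : ((6 : NNReal) : ℝ) = 6 := by norm_num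
    rw [h6, ladderM_succ p ξ hval i ω, add_sub_cancel_left]
    have h1 := ladderA_nonneg ξ i ω
    have h2 := ladderA_le_one ξ i ω
    have h3 := ladderA_nonneg ξ (i + 1) ω
    have h4 := ladderA_le_one ξ (i + 1) ω
    rw [abs_le]; constructor <;> nlinarith
  have hup := hmart.submartingale.bddAbove_iff_exists_tendsto hincb
  have hud := hmart.bddAbove_range_iff_bddBelow_range hincb
  -- increments are at least 1 in absolute value
  have hinc1 : ∀ i ω, 1 ≤ |ladderM p ξ (i + 1) ω - ladderM p ξ i ω| := by
    intro i ω
    rw [ladderM_succ p ξ hval i ω, add_sub_cancel_left]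
    have h1 := ladderA_nonneg ξ i ω
    have h2 := ladderA_le_one ξ i ω
    rcases hval (i + 1) ω with h | h
    · have hA1 : ladderA ξ (i + 1) ω = 1 := by simp [ladderA, h, Nat.succ_ne_zero]
      rw [hA1, le_abs]; left; nlinarith
    · have hA0 : ladderA ξ (i + 1) ω = 0 := by simp [ladderA, h, Nat.succ_ne_zero]
      rw [hA0, le_abs]; right; nlinarith
  have hnc : ∀ ω, ¬ ∃ c, Tendsto (fun n => ladderM p ξ n ω) atTop (nhds c) := by
    rintro ω ⟨c, hc⟩
    have hshift : Tendsto (fun n => ladderM p ξ (n + 1) ω) atTop (nhds c) :=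
      hc.comp (tendsto_add_atTop_nat 1)
    have hd := (hshift.sub hc).abs
    rw [sub_self, abs_zero] at hd
    obtain ⟨i, hi⟩ := (hd.eventually_lt_const (by norm_num : (0 : ℝ) < 1)).exists
    exact absurd (hinc1 i ω) (not_le.2 hi)
  have key : ∀ᵐ ω ∂P, ¬ BddAbove (Set.range fun n => ladderM p ξ n ω) ∧
      ¬ BddBelow (Set.range fun n => ladderM p ξ n ω) := by
    filter_upwards [hup, hud] with ω h1 h2
    have hna : ¬ BddAbove (Set.range fun n => ladderM p ξ n ω) := fun hb => hnc ω (h1.mp hb)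
    exact ⟨hna, fun hb => hna (h2.mpr hb)⟩
  have hx1 : (1 : ℝ) ≤ (x : ℝ) := by exact_mod_cast hx
  constructor
  · have hae : ∀ᵐ ω ∂P, ω ∈ {ω | ∃ n, 1 ≤ n ∧ x ≤ ladderS ξ n ω} := by
      filter_upwards [key] with ω hω
      obtain ⟨y, ⟨n, rfl⟩, hy⟩ := not_bddAbove_iff.1 hω.1 ((x : ℝ) + 1)
      change (x : ℝ) + 1 < ladderM p ξ n ω at hy
      have hn : n ≠ 0 := by
        rintro rfl
        rw [ladderM_zero] at hy; linarith
      have hS : (x : ℝ) < (ladderS ξ n ω : ℝ) := by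
        have hA := ladderA_le_one ξ n ω
        have hA0 := ladderA_nonneg ξ n ω
        have hMe : ladderM p ξ n ω = (ladderS ξ n ω : ℝ) + p * ladderA ξ n ω := rfl
        nlinarith
      exact ⟨n, by omega, le_of_lt (by exact_mod_cast hS)⟩
    have h := measure_congr (Filter.eventuallyEq_univ.2 hae)
    rw [measure_univ] at h
    exact h
  · have hae : ∀ᵐ ω ∂P, ω ∈ {ω | ∃ n, 1 ≤ n ∧ ladderS ξ n ω ≤ -x} := by
      filter_upwards [key] with ω hω
      obtain ⟨y, ⟨n, rfl⟩, hy⟩ := not_bddBelow_iff.1 hω.2 (-(x : ℝ))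
      change ladderM p ξ n ω < -(x : ℝ) at hy
      have hn : n ≠ 0 := by
        rintro rfl
        rw [ladderM_zero] at hy; linarith
      have hS : (ladderS ξ n ω : ℝ) < -(x : ℝ) := by
        have hA := ladderA_le_one ξ n ω
        have hA0 := ladderA_nonneg ξ n ω
        have hMe : ladderM p ξ n ω = (ladderS ξ n ω : ℝ) + p * ladderA ξ n ω := rfl
        nlinarith
      refine ⟨n, by omega, le_of_lt ?_⟩
      exact_mod_cast hS
    have h := measure_congr (Filter.eventuallyEq_univ.2 hae)
    rw [measure_univ] at h
    exact h

end
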